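/- Let τ : Ω → ℕ be a random variable with E[τ] = λ(D) < ∞, and let (P_i)_{i∈ℕ} and (P̃_i)_{i∈ℕ} be sequences of real random variables, independent of τ, such that E[|P_i − P̃_i|^s] ≤ ε for all i and some s ∈ [1,∞), ε > 0. Then E[ max_{1 ≤ i ≤ τ} |P_i − P̃_i|^s ] ≤ λ(D)·ε. -/

import Mathlib

open MeasureTheory ProbabilityTheory

/-- Sampling error of the jump part: `E[max_{1 ≤ i ≤ τ} |P_i − P̃_i|^s] ≤ λ(D)·ε`. -/
theorem stmt3 {Ω : Type*} [MeasurableSpace Ω] (μ : Measure Ω) [IsProbabilityMeasure μ]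
    (τ : Ω → ℕ) (hτmeas : Measurable τ) (hτ1 : ∀ ω, 1 ≤ τ ω)
    (lamD : ℝ) (hτint : Integrable (fun ω => (τ ω : ℝ)) μ)
    (hτmean : ∫ ω, (τ ω : ℝ) ∂μ = lamD)
    (P Ptil : ℕ → Ω → ℝ) (hPmeas : ∀ i, Measurable (P i)) (hPtmeas : ∀ i, Measurable (Ptil i))
    (s : ℝ) (hs : 1 ≤ s) (ε : ℝ) (hε : 0 < ε)
    (hindep : Indep (MeasurableSpace.comap τ inferInstance)
      (⨆ i, MeasurableSpace.comap (fun ω => |P i ω - Ptil i ω|) inferInstance) μ)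
    (hint : ∀ i, Integrable (fun ω => |P i ω - Ptil i ω| ^ s) μ)
    (hmom : ∀ i, ∫ ω, |P i ω - Ptil i ω| ^ s ∂μ ≤ ε)
    (hmaxint : Integrable (fun ω => (Finset.Icc 1 (τ ω)).sup'
      (Finset.nonempty_Icc.mpr (hτ1 ω)) (fun i => |P i ω - Ptil i ω| ^ s)) μ) :
    ∫ ω, (Finset.Icc 1 (τ ω)).sup' (Finset.nonempty_Icc.mpr (hτ1 ω))
        (fun i => |P i ω - Ptil i ω| ^ s) ∂μ ≤ lamD * ε := by
  classical
  have hs0 : (0:ℝ) ≤ s := le_trans zero_le_one hs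
  have hlamD : 0 ≤ lamD := hτmean ▸ integral_nonneg (fun ω => Nat.cast_nonneg _)
  set X : ℕ → Ω → ℝ := fun i ω => |P i ω - Ptil i ω| ^ s with hXdef
  have hXmeas : ∀ i, Measurable (X i) := fun i =>
    (Real.continuous_rpow_const hs0).measurable.comp (((hPmeas i).sub (hPtmeas i)).abs)
  have hXnn : ∀ i ω, 0 ≤ X i ω := fun i ω => Real.rpow_nonneg (abs_nonneg _) s
  set Y : ℕ → Ω → ENNReal := fun i ω => ENNReal.ofReal (X i ω) with hYdef
  have hYmeas : ∀ i, Measurable (Y i) := fun i => (hXmeas i).ennreal_ofReal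
  have hYint : ∀ i, ∫⁻ ω, Y i ω ∂μ ≤ ENNReal.ofReal ε := by
    intro i
    rw [← ofReal_integral_eq_lintegral_ofReal (hint i) (Filter.Eventually.of_forall (hXnn i))]
    exact ENNReal.ofReal_le_ofReal (hmom i)
  set f : ℕ → Ω → ENNReal := fun i ω => if i ≤ τ ω then 1 else 0 with hfdef
  have hset : ∀ i, MeasurableSet {ω | i ≤ τ ω} := fun i => hτmeas measurableSet_Ici
  have hfind : ∀ i, f i = Set.indicator {ω | i ≤ τ ω} (fun _ => 1) := by
    intro i; funext ω; simp [hfdef, Set.indicator_apply, Set.mem_setOf_eq]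
  have hfmeas : ∀ i, Measurable (f i) := by
    intro i; rw [hfind i]; exact (measurable_const.indicator (hset i))
  have hfint : ∀ i, ∫⁻ ω, f i ω ∂μ = μ {ω | i ≤ τ ω} := by
    intro i
    rw [hfind i]
    exact lintegral_indicator_one (μ := μ) (hset i)
  -- independence
  have hprod : ∀ i, ∫⁻ ω, f i ω * Y i ω ∂μ = (∫⁻ ω, f i ω ∂μ) * ∫⁻ ω, Y i ω ∂μ := by
    intro i
    refine lintegral_mul_eq_lintegral_mul_lintegral_of_independent_measurableSpace
      (hτmeas.comap_le)
      (iSup_le fun j => (((hPmeas j).sub (hPtmeas j)).abs).comap_le) hindep ?_ ?_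
    · exact (measurable_from_top
        (f := fun n : ℕ => if i ≤ n then (1:ENNReal) else 0)).comp
        (Measurable.of_comap_le le_rfl)
    · have h1 : Measurable[⨆ j, MeasurableSpace.comap
          (fun ω => |P j ω - Ptil j ω|) inferInstance] (fun ω => |P i ω - Ptil i ω|) :=
        (Measurable.of_comap_le (le_iSup (fun j => MeasurableSpace.comap
          (fun ω => |P j ω - Ptil j ω|) inferInstance) i))
      exact ((Real.continuous_rpow_const hs0).measurable.ennreal_ofReal).comp h1
  -- E[τ] as a sum of tail probabilities
  have htail : ∀ ω, ∑' i : ℕ, f (i + 1) ω = (τ ω : ENNReal) := by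
    intro ω
    have hsupp : ∀ i ∉ Finset.range (τ ω), f (i + 1) ω = 0 := by
      intro i hi
      simp only [Finset.mem_range, not_lt] at hi
      simp [hfdef, Nat.succ_le_iff, not_lt.mpr hi]
    rw [tsum_eq_sum hsupp]
    have : ∀ i ∈ Finset.range (τ ω), f (i + 1) ω = 1 := by
      intro i hi
      simp only [Finset.mem_range] at hi
      simp [hfdef, Nat.succ_le_iff, hi]
    rw [Finset.sum_congr rfl this]
    simp
  have hsum : ∑' i : ℕ, μ {ω | i + 1 ≤ τ ω} = ENNReal.ofReal lamD := by
    have h1 : ∑' i : ℕ, μ {ω | i + 1 ≤ τ ω} = ∫⁻ ω, ∑' i : ℕ, f (i + 1) ω ∂μ := by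
      rw [lintegral_tsum (fun i => (hfmeas (i + 1)).aemeasurable)]
      exact tsum_congr fun i => (hfint (i + 1)).symm
    rw [h1]
    have h2 : ∫⁻ ω, ∑' i : ℕ, f (i + 1) ω ∂μ = ∫⁻ ω, ENNReal.ofReal ((τ ω : ℝ)) ∂μ := by
      refine lintegral_congr fun ω => ?_
      rw [htail ω, ENNReal.ofReal_natCast]
    rw [h2, ← ofReal_integral_eq_lintegral_ofReal hτint
      (Filter.Eventually.of_forall fun ω => Nat.cast_nonneg _), hτmean]
  -- pointwise bound
  have hpt : ∀ ω, ENNReal.ofReal ((Finset.Icc 1 (τ ω)).sup'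
      (Finset.nonempty_Icc.mpr (hτ1 ω)) (fun i => X i ω))
      ≤ ∑' i : ℕ, f (i + 1) ω * Y (i + 1) ω := by
    intro ω
    obtain ⟨j, hj, hjsup⟩ := Finset.exists_mem_eq_sup' (Finset.nonempty_Icc.mpr (hτ1 ω))
      (fun i => X i ω)
    rw [hjsup]
    rw [Finset.mem_Icc] at hj
    obtain ⟨k, rfl⟩ : ∃ k, j = k + 1 := ⟨j - 1, (Nat.succ_pred_eq_of_pos hj.1).symm⟩
    calc ENNReal.ofReal (X (k + 1) ω) = f (k + 1) ω * Y (k + 1) ω := by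
          simp [hfdef, hYdef, hj.2]
      _ ≤ ∑' i : ℕ, f (i + 1) ω * Y (i + 1) ω := ENNReal.le_tsum k
  -- put everything together
  have hnn : 0 ≤ᵐ[μ] fun ω => (Finset.Icc 1 (τ ω)).sup'
      (Finset.nonempty_Icc.mpr (hτ1 ω)) (fun i => X i ω) :=
    Filter.Eventually.of_forall fun ω =>
      le_trans (hXnn 1 ω) (Finset.le_sup' (fun i => X i ω) (Finset.mem_Icc.mpr ⟨le_refl 1, hτ1 ω⟩))
  rw [integral_eq_lintegral_of_nonneg_ae hnn hmaxint.aestronglyMeasurable]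
  refine ENNReal.toReal_le_of_le_ofReal (mul_nonneg hlamD hε.le) ?_
  calc ∫⁻ ω, ENNReal.ofReal ((Finset.Icc 1 (τ ω)).sup'
        (Finset.nonempty_Icc.mpr (hτ1 ω)) (fun i => X i ω)) ∂μ
      ≤ ∫⁻ ω, ∑' i : ℕ, f (i + 1) ω * Y (i + 1) ω ∂μ := lintegral_mono hpt
    _ = ∑' i : ℕ, ∫⁻ ω, f (i + 1) ω * Y (i + 1) ω ∂μ :=
        lintegral_tsum fun i => ((hfmeas (i + 1)).mul (hYmeas (i + 1))).aemeasurable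
    _ = ∑' i : ℕ, μ {ω | i + 1 ≤ τ ω} * ∫⁻ ω, Y (i + 1) ω ∂μ := by
        refine tsum_congr fun i => ?_
        rw [hprod (i + 1), hfint (i + 1)]
    _ ≤ ∑' i : ℕ, μ {ω | i + 1 ≤ τ ω} * ENNReal.ofReal ε :=
        ENNReal.tsum_le_tsum fun i => mul_le_mul_right (hYint (i + 1)) _
    _ = (∑' i : ℕ, μ {ω | i + 1 ≤ τ ω}) * ENNReal.ofReal ε := ENNReal.tsum_mul_right
    _ = ENNReal.ofReal lamD * ENNReal.ofReal ε := by rw [hsum]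
    _ = ENNReal.ofReal (lamD * ε) := (ENNReal.ofReal_mul hlamD).symm
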